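/- Let m ≥ 1 be an integer, Δ ≥ 0, 0 < λ_min ≤ λ_max, and κ > 0 reals, and set v = λ_min·κ/(1+κ) (so 0 < v < λ_min). Let Y_1, …, Y_m be independent nonnegative random variables on a probability space such that E[ e^{v Y_d} ] ≤ λ_max/(λ_min − v) for each d. Then P( ∑_{d=1}^m (Δ + Y_d) > m·( Δ + (1+κ)/λ_min ) ) ≤ exp( m·( −κ + log( (λ_max/λ_min)·(1+κ) ) ) ). -/

import Mathlib

open MeasureTheory ProbabilityTheory Real

/-- Chernoff core of the epoch-waiting-time bound: with
`v = λ_min·κ/(1+κ)`, if `Y_1, …, Y_m` are independent nonnegative random variables whose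
moment generating functions at `v` are bounded by `λ_max/(λ_min − v)`, then
`P( ∑_{d=1}^m (Δ + Y_d) > m·(Δ + (1+κ)/λ_min) )
  ≤ exp( m·(−κ + log((λ_max/λ_min)·(1+κ))) )`. -/
theorem epoch_waiting_chernoff {Ω : Type*} [MeasurableSpace Ω] (μ : Measure Ω)
    [IsProbabilityMeasure μ] (m : ℕ) (hm : 1 ≤ m) (Δ : ℝ) (hΔ : 0 ≤ Δ)
    (lammin lammax κ : ℝ) (h0 : 0 < lammin) (h1 : lammin ≤ lammax) (hκ : 0 < κ)
    (v : ℝ) (hv : v = lammin * κ / (1 + κ))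
    (Y : Fin m → Ω → ℝ) (hmeas : ∀ d, Measurable (Y d))
    (hnonneg : ∀ d ω, 0 ≤ Y d ω)
    (hindep : iIndepFun Y μ)
    (hint : ∀ d, Integrable (fun ω => Real.exp (v * Y d ω)) μ)
    (hmgf : ∀ d, ∫ ω, Real.exp (v * Y d ω) ∂μ ≤ lammax / (lammin - v)) :
    (μ {ω | m * (Δ + (1 + κ) / lammin) < ∑ d, (Δ + Y d ω)}).toReal ≤
      Real.exp (m * (-κ + Real.log ((lammax / lammin) * (1 + κ)))) := by
  have hκ1 : (0:ℝ) < 1 + κ := by linarith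
  have hv0 : 0 < v := by
    rw [hv]; positivity
  have hsub : lammin - v = lammin / (1 + κ) := by
    rw [hv]; field_simp; ring
  have hBpos : 0 < lammax / (lammin - v) := by
    rw [hsub]
    have : 0 < lammin / (1 + κ) := by positivity
    exact div_pos (lt_of_lt_of_le h0 h1) this
  set t : ℝ := (m : ℝ) * ((1 + κ) / lammin) with ht
  set S : Ω → ℝ := ∑ d, Y d with hS
  -- the event is contained in {t ≤ S}
  have hsubset : {ω | (m:ℝ) * (Δ + (1 + κ) / lammin) < ∑ d, (Δ + Y d ω)}
      ⊆ {ω | t ≤ S ω} := by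
    intro ω hω
    simp only [Set.mem_setOf_eq] at hω ⊢
    have hsum : ∑ d, (Δ + Y d ω) = (m:ℝ) * Δ + S ω := by
      rw [Finset.sum_add_distrib]
      simp [hS, Finset.sum_apply, mul_comm]
    rw [hsum] at hω
    have := hω
    nlinarith [hω]
  have hintS : Integrable (fun ω => Real.exp (v * S ω)) μ :=
    hindep.integrable_exp_mul_sum hmeas (fun i _ => hint i)
  have hcher := measure_ge_le_exp_mul_mgf (μ := μ) (X := S) t hv0.le hintS
  have hmono : (μ {ω | (m:ℝ) * (Δ + (1 + κ) / lammin) < ∑ d, (Δ + Y d ω)}).toReal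
      ≤ (μ {ω | t ≤ S ω}).toReal := by
    apply ENNReal.toReal_mono (measure_ne_top _ _)
    exact measure_mono hsubset
  refine hmono.trans (hcher.trans ?_)
  -- bound the mgf of the sum
  have hmgfS : mgf S μ v = ∏ d, mgf (Y d) μ v := hindep.mgf_sum hmeas Finset.univ
  have hprod : mgf S μ v ≤ (lammax / (lammin - v)) ^ m := by
    rw [hmgfS]
    calc ∏ d, mgf (Y d) μ v ≤ ∏ _d : Fin m, (lammax / (lammin - v)) := by
          apply Finset.prod_le_prod
          · intro i _; exact mgf_nonneg
          · intro i _; exact hmgf i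
      _ = (lammax / (lammin - v)) ^ m := by simp [div_pow]
  have hexp : Real.exp (-v * t) * (lammax / (lammin - v)) ^ m
      = Real.exp (m * (-κ + Real.log ((lammax / lammin) * (1 + κ)))) := by
    have hB : lammax / (lammin - v) = (lammax / lammin) * (1 + κ) := by
      rw [hsub]; field_simp
    have hvt : v * t = m * κ := by
      rw [hv, ht]; field_simp
    have hlmax : 0 < lammax := lt_of_lt_of_le h0 h1
    have hB' : (0:ℝ) < lammax / lammin * (1 + κ) := by positivity
    rw [hB, neg_mul, hvt,
      show (m:ℝ) * (-κ + Real.log (lammax / lammin * (1 + κ)))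
        = -((m:ℝ) * κ) + Real.log ((lammax / lammin * (1 + κ)) ^ m) by
          rw [Real.log_pow]; ring,
      Real.exp_add, Real.exp_log (pow_pos hB' m)]
  calc Real.exp (-v * t) * mgf S μ v
      ≤ Real.exp (-v * t) * (lammax / (lammin - v)) ^ m := by
        apply mul_le_mul_of_nonneg_left hprod (Real.exp_nonneg _)
    _ = _ := hexp
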